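/- Let n ≥ 1 and let A and B be n×n complex matrices such that Re⟨(A+B)g, g⟩ < 0 for every nonzero g ∈ ℂⁿ. Then for every g ∈ ℂⁿ there exists t₀ > 0 such that for all t with 0 < t ≤ t₀ one has ‖exp(tA)·exp(tB)·g‖ ≤ ‖g‖; i.e., the first-order operator-exponential scheme S₁(t) = exp(tA)exp(tB) is stable for sufficiently small positive time steps. -/

import Mathlib

open NormedSpace

lemma aux_exp_deriv {n : ℕ} (C' : EuclideanSpace ℂ (Fin n) →L[ℂ] EuclideanSpace ℂ (Fin n)) :
    HasDerivAt (fun u : ℝ => exp ((u:ℂ) • C')) C' 0 := by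
  have h1 : HasDerivAt (fun u : ℝ => exp (u • C')) (exp ((0:ℝ) • C') * C') 0 :=
    hasDerivAt_exp_smul_const C' (0:ℝ)
  have he : (exp : (EuclideanSpace ℂ (Fin n) →L[ℂ] EuclideanSpace ℂ (Fin n)) → _) = exp :=
    rfl
  have hs : ∀ u : ℝ, (u:ℂ) • C' = u • C' := fun u => algebraMap_smul ℂ u C'
  have h2 : (0:ℝ) • C' = 0 := zero_smul ℝ C'
  rw [h2, NormedSpace.exp_zero, one_mul, he] at h1
  simp only [hs]
  exact h1

lemma aux_clm_exp {n : ℕ} (M : Matrix (Fin n) (Fin n) ℂ) :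
    Matrix.toEuclideanCLM (n := Fin n) (𝕜 := ℂ) (exp M)
      = exp (Matrix.toEuclideanCLM (n := Fin n) (𝕜 := ℂ) M) := by
  letI : SeminormedRing (Matrix (Fin n) (Fin n) ℂ) := Matrix.linftyOpSemiNormedRing
  letI : NormedRing (Matrix (Fin n) (Fin n) ℂ) := Matrix.linftyOpNormedRing
  letI : NormedAlgebra ℂ (Matrix (Fin n) (Fin n) ℂ) := Matrix.linftyOpNormedAlgebra
  letI : NormedAlgebra ℚ (Matrix (Fin n) (Fin n) ℂ) := NormedAlgebra.restrictScalars ℚ ℂ _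
  have hfc : Continuous (Matrix.toEuclideanCLM (n := Fin n) (𝕜 := ℂ)) := by
    exact LinearMap.continuous_of_finiteDimensional
      { toFun := ⇑(Matrix.toEuclideanCLM (n := Fin n) (𝕜 := ℂ)),
        map_add' := fun x y => map_add _ x y,
        map_smul' := fun c x => map_smul _ c x }
  exact map_exp (Matrix.toEuclideanCLM (n := Fin n) (𝕜 := ℂ)) hfc M

lemma aux_exp_zero' {n : ℕ} (C' : EuclideanSpace ℂ (Fin n) →L[ℂ] EuclideanSpace ℂ (Fin n)) :
    exp (((0:ℝ):ℂ) • C') = 1 := by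
  have h0 : ((0:ℝ):ℂ) • C' = 0 := by rw [Complex.ofReal_zero]; exact zero_smul ℂ C'
  rw [h0, NormedSpace.exp_zero]

set_option maxHeartbeats 1000000 in
theorem first_order_scheme_stable (n : ℕ) (hn : 1 ≤ n)
    (A B : Matrix (Fin n) (Fin n) ℂ)
    (h : ∀ g : EuclideanSpace ℂ (Fin n), g ≠ 0 →
      (inner ℂ (Matrix.toEuclideanLin (A + B) g) g : ℂ).re < 0) :
    ∀ g : EuclideanSpace ℂ (Fin n), ∃ t₀ > (0 : ℝ), ∀ t : ℝ, 0 < t → t ≤ t₀ →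
      ‖Matrix.toEuclideanLin
          (NormedSpace.exp ((t : ℂ) • A) * NormedSpace.exp ((t : ℂ) • B)) g‖ ≤ ‖g‖ := by
  intro g
  by_cases hg : g = 0
  · exact ⟨1, one_pos, fun t _ _ => by simp [hg]⟩
  set A' := Matrix.toEuclideanCLM (n := Fin n) (𝕜 := ℂ) A with hA'
  set B' := Matrix.toEuclideanCLM (n := Fin n) (𝕜 := ℂ) B with hB'
  set v : ℝ → EuclideanSpace ℂ (Fin n) :=
    fun t => (exp ((t:ℂ) • A') * exp ((t:ℂ) • B')) g with hvdef
  have key : ∀ t : ℝ, (Matrix.toEuclideanLin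
      (exp ((t : ℂ) • A) * exp ((t : ℂ) • B)) g : EuclideanSpace ℂ (Fin n)) = v t := by
    intro t
    have h0 : Matrix.toEuclideanLin (exp ((t : ℂ) • A) * exp ((t : ℂ) • B)) g
        = Matrix.toEuclideanCLM (n := Fin n) (𝕜 := ℂ)
            (exp ((t : ℂ) • A) * exp ((t : ℂ) • B)) g := rfl
    rw [h0, map_mul, aux_clm_exp, aux_clm_exp, map_smul, map_smul]
  have hv0 : v 0 = g := by
    show (exp (((0:ℝ):ℂ) • A') * exp (((0:ℝ):ℂ) • B')) g = g
    rw [aux_exp_zero', aux_exp_zero', mul_one, ContinuousLinearMap.one_apply]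
  have hP : HasDerivAt (fun t : ℝ => exp ((t:ℂ) • A') * exp ((t:ℂ) • B')) (A' + B') 0 := by
    have h1 := (aux_exp_deriv A').mul (aux_exp_deriv B')
    rw [aux_exp_zero' A', aux_exp_zero' B', mul_one, one_mul] at h1
    exact h1
  have hv : HasDerivAt v ((A' + B') g) 0 := by
    have h2 := ((ContinuousLinearMap.apply ℂ (EuclideanSpace ℂ (Fin n)) g).restrictScalars
      ℝ).hasFDerivAt.comp_hasDerivAt 0 hP
    exact h2
  set w : EuclideanSpace ℂ (Fin n) := (A' + B') g with hw
  have hψ : HasDerivAt (fun t : ℝ => (inner ℂ (v t) (v t) : ℂ).re)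
      ((inner ℂ (v 0) w + inner ℂ w (v 0) : ℂ).re) 0 :=
    Complex.reCLM.hasFDerivAt.comp_hasDerivAt 0 (hv.inner ℂ hv)
  have hd : ((inner ℂ (v 0) w + inner ℂ w (v 0) : ℂ)).re < 0 := by
    have hAB : w = Matrix.toEuclideanLin (A + B) g := by
      rw [hw, hA', hB', ← map_add]; rfl
    have hre : (inner ℂ (v 0) w : ℂ).re = (inner ℂ w (v 0) : ℂ).re := by
      rw [← inner_conj_symm (v 0) w, Complex.conj_re]
    rw [Complex.add_re, hre, hv0, hAB]
    linarith [h g hg]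
  -- slope argument
  rw [hasDerivAt_iff_tendsto_slope] at hψ
  have hneg : ∀ᶠ t in nhdsWithin 0 (Set.Ioi 0),
      slope (fun t : ℝ => (inner ℂ (v t) (v t) : ℂ).re) 0 t < 0 := by
    have h4 := hψ.eventually (eventually_lt_nhds hd)
    exact h4.filter_mono (nhdsWithin_mono 0 (fun x hx => ne_of_gt hx))
  obtain ⟨u, hu, hsub⟩ := mem_nhdsGT_iff_exists_Ioc_subset.mp hneg
  refine ⟨u, hu, fun t ht htu => ?_⟩
  have hts := hsub ⟨ht, htu⟩
  simp only [Set.mem_setOf_eq, slope_def_field] at hts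
  have hlt : (inner ℂ (v t) (v t) : ℂ).re < (inner ℂ (v 0) (v 0) : ℂ).re := by
    have htpos : (0:ℝ) < t - 0 := by linarith
    have := div_neg_iff.mp hts
    rcases this with ⟨_, hneg'⟩ | ⟨hnum, _⟩
    · linarith
    · linarith
  rw [key t]
  have h5 : (inner ℂ (v t) (v t) : ℂ).re = ‖v t‖ ^ 2 := by
    rw [← RCLike.re_to_complex]; exact inner_self_eq_norm_sq (v t)
  have h6 : (inner ℂ (v 0) (v 0) : ℂ).re = ‖g‖ ^ 2 := by
    rw [hv0, ← RCLike.re_to_complex]; exact inner_self_eq_norm_sq g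
  rw [h5, h6] at hlt
  nlinarith [norm_nonneg (v t), norm_nonneg g]
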